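/- arXiv:1707.07762 — 3 statements merged into one kernel-verified Lean document; each statement's English description precedes it below -/
import Mathlib

section
/- For t > 0 and parameters α, β > 0 and complex ξ, η with positive real parts, the convolution integral ∫₀ᵗ (t−y)^{α−1} e^{−ξ(t−y)} y^{β−1} e^{−ηy} dy equals t^{α+β−1} e^{−ξt} · (Γ(α)Γ(β)/Γ(α+β)) · ₁F₁(β, α+β; (ξ−η)t), where ₁F₁ is the confluent hypergeometric function. -/
open MeasureTheory intervalIntegral

noncomputable def hyp1F1 (a b z : ℂ) : ℂ :=
  ∑' k : ℕ, (∏ i ∈ Finset.range k, (a + i) / (b + i)) * z ^ k / (k.factorial : ℂ)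

lemma Gamma_add_nat' {s : ℂ} (hs : 0 < s.re) (k : ℕ) :
    Complex.Gamma (s + k) = Complex.Gamma s * ∏ i ∈ Finset.range k, (s + i) := by
  induction k with
  | zero => simp
  | succ k ih =>
    have hne : s + (k : ℂ) ≠ 0 := by
      intro h
      have h2 : s.re + (k:ℝ) = 0 := by simpa using congrArg Complex.re h
      have : (0:ℝ) ≤ (k:ℝ) := Nat.cast_nonneg k
      linarith
    have h1 : s + ((k + 1 : ℕ) : ℂ) = (s + k) + 1 := by push_cast; ring
    rw [h1, Complex.Gamma_add_one _ hne, ih, Finset.prod_range_succ]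
    ring

lemma aux_integrable' {a b : ℂ} (ha : 0 < a.re) (hb : 0 < b.re) {t : ℝ} (ht : 0 < t) :
    IntervalIntegrable (fun y : ℝ => (y:ℂ) ^ (b - 1) * ((t:ℂ) - y) ^ (a - 1)) volume 0 t := by
  have h1 := Complex.betaIntegral_convergent hb ha
  have h2 := h1.comp_mul_left (c := t⁻¹)
  rw [zero_div, one_div, inv_inv] at h2
  have h3 := h2.const_mul ((t:ℂ) ^ (b-1) * (t:ℂ) ^ (a-1))
  apply h3.congr_ae
  rw [Filter.EventuallyEq, ae_restrict_iff' measurableSet_uIoc]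
  refine ae_of_all _ fun y hy => ?_
  rw [Set.uIoc_of_le ht.le] at hy
  have hy0 : 0 < y := hy.1
  have hyt : y ≤ t := hy.2
  have key1 : (y:ℂ) ^ (b-1) = (t:ℂ)^(b-1) * ((t⁻¹ * y : ℝ) : ℂ)^(b-1) := by
    rw [← Complex.mul_cpow_ofReal_nonneg ht.le (by positivity : (0:ℝ) ≤ t⁻¹ * y)]
    congr 1
    push_cast
    rw [← mul_assoc, mul_inv_cancel₀ (by exact_mod_cast ht.ne'), one_mul]
  have key2 : ((t:ℂ) - y) ^ (a-1) = (t:ℂ)^(a-1) * ((1:ℂ) - ((t⁻¹ * y : ℝ):ℂ))^(a-1) := by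
    rw [show (1:ℂ) - ((t⁻¹ * y : ℝ):ℂ) = (((1 - t⁻¹ * y : ℝ)):ℂ) by push_cast; ring,
      ← Complex.mul_cpow_ofReal_nonneg ht.le (by
        have : t⁻¹ * y ≤ 1 := by rw [inv_mul_le_iff₀ ht]; linarith
        linarith)]
    congr 1
    have htne : (t:ℂ) ≠ 0 := by exact_mod_cast ht.ne'
    push_cast
    field_simp
  rw [key1, key2]
  ring

lemma term_integral' {a b : ℂ} (ha : 0 < a.re) (hb : 0 < b.re) {t : ℝ} (ht : 0 < t) (k : ℕ) :
    ∫ y in Set.Ioc (0:ℝ) t, (y:ℂ) ^ (b - 1) * ((t:ℂ) - y) ^ (a - 1) * (y:ℂ)^k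
      = (t:ℂ) ^ (b + k + a - 1) * Complex.betaIntegral (b + k) a := by
  have h1 : ∀ y ∈ Set.Ioc (0:ℝ) t,
      (y:ℂ) ^ (b - 1) * ((t:ℂ) - y) ^ (a - 1) * (y:ℂ)^k
        = (y:ℂ) ^ (b + k - 1) * ((t:ℂ) - y) ^ (a - 1) := by
    intro y hy
    have hyne : (y:ℂ) ≠ 0 := by exact_mod_cast hy.1.ne'
    rw [show (y:ℂ)^k = (y:ℂ)^((k:ℂ)) from (Complex.cpow_natCast _ _).symm,
      show b + k - 1 = (b-1) + k by ring, Complex.cpow_add _ _ hyne, Complex.cpow_natCast]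
    ring
  rw [setIntegral_congr_fun measurableSet_Ioc h1, ← intervalIntegral.integral_of_le ht.le,
    Complex.betaIntegral_scaled (b+k) a ht]

theorem convolution_integral_eq_hyp1F1
    (α β : ℝ) (hα : 0 < α) (hβ : 0 < β) (ξ η : ℂ) (hξ : 0 < ξ.re) (hη : 0 < η.re)
    (t : ℝ) (ht : 0 < t) :
    (∫ y in (0 : ℝ)..t,
        (((t - y) ^ (α - 1) : ℝ) : ℂ) * Complex.exp (-ξ * (t - y)) *
          ((y ^ (β - 1) : ℝ) : ℂ) * Complex.exp (-η * y))
      = ((t ^ (α + β - 1) : ℝ) : ℂ) * Complex.exp (-ξ * t) *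
          (Complex.Gamma α * Complex.Gamma β / Complex.Gamma (α + β)) *
          hyp1F1 β (α + β) ((ξ - η) * t) := by
  have htne : (t:ℂ) ≠ 0 := by exact_mod_cast ht.ne'
  have hαre : (0:ℝ) < ((α:ℂ)).re := by simpa using hα
  have hβre : (0:ℝ) < ((β:ℂ)).re := by simpa using hβ
  set c : ℂ := ξ - η with hc
  set F : ℕ → ℝ → ℂ := fun k y =>
    (y:ℂ) ^ ((β:ℂ) - 1) * ((t:ℂ) - y) ^ ((α:ℂ) - 1) * ((c*y)^k / (k.factorial : ℂ)) with hF
  -- Step 1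
  have key : (∫ y in (0 : ℝ)..t,
        (((t - y) ^ (α - 1) : ℝ) : ℂ) * Complex.exp (-ξ * (t - y)) *
          ((y ^ (β - 1) : ℝ) : ℂ) * Complex.exp (-η * y))
      = Complex.exp (-ξ*t) * ∫ y in Set.Ioc (0:ℝ) t,
          (y:ℂ)^((β:ℂ)-1) * ((t:ℂ)-y)^((α:ℂ)-1) * Complex.exp (c*y) := by
    rw [intervalIntegral.integral_of_le ht.le, ← MeasureTheory.integral_const_mul]
    refine setIntegral_congr_fun measurableSet_Ioc fun y hy => ?_
    rw [Complex.ofReal_cpow (by linarith [hy.2] : (0:ℝ) ≤ t - y),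
        Complex.ofReal_cpow hy.1.le]
    push_cast
    rw [show -ξ * ((t:ℂ) - (y:ℂ)) = -ξ*(t:ℂ) + ξ*(y:ℂ) by ring, Complex.exp_add,
        show c * (y:ℂ) = ξ*(y:ℂ) + -η*(y:ℂ) by rw [hc]; ring, Complex.exp_add]
    ring
  -- Step 2: pointwise series
  have hexp : ∀ z : ℂ, Complex.exp z = ∑' k : ℕ, z^k / (k.factorial : ℂ) := fun z => by
    rw [Complex.exp_eq_exp_ℂ, NormedSpace.exp_eq_tsum_div]
  have hsum_pt : ∀ y ∈ Set.Ioc (0:ℝ) t,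
      (y:ℂ)^((β:ℂ)-1) * ((t:ℂ)-y)^((α:ℂ)-1) * Complex.exp (c*y) = ∑' k, F k y := by
    intro y _
    rw [hexp (c*y), ← tsum_mul_left]
  -- integrability
  have hFint : ∀ k : ℕ, IntegrableOn (F k) (Set.Ioc (0:ℝ) t) volume := by
    intro k
    have hcont : ContinuousOn (fun y : ℝ => (c*y)^k / (k.factorial:ℂ)) (Set.uIcc 0 t) :=
      (((continuous_const.mul Complex.continuous_ofReal).pow k).div_const _).continuousOn
    have h1 := (aux_integrable' hαre hβre ht).mul_continuousOn hcont
    exact (intervalIntegrable_iff_integrableOn_Ioc_of_le ht.le).mp h1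
  have hGint : IntegrableOn (fun y : ℝ => (y:ℂ) ^ ((β:ℂ) - 1) * ((t:ℂ) - y) ^ ((α:ℂ) - 1))
      (Set.Ioc (0:ℝ) t) volume :=
    (intervalIntegrable_iff_integrableOn_Ioc_of_le ht.le).mp (aux_integrable' hαre hβre ht)
  -- summability of integral norms
  have hnorm : ∀ k : ℕ, (∫ y in Set.Ioc (0:ℝ) t, ‖F k y‖)
      ≤ (∫ y in Set.Ioc (0:ℝ) t, ‖(y:ℂ)^((β:ℂ)-1) * ((t:ℂ)-y)^((α:ℂ)-1)‖) * ((‖c‖*t)^k / (k.factorial : ℝ)) := by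
    intro k
    rw [← MeasureTheory.integral_mul_const]
    refine setIntegral_mono_on ((hFint k).norm) (hGint.norm.mul_const _) measurableSet_Ioc
      fun y hy => ?_
    have h1 : ‖F k y‖ = ‖(y:ℂ)^((β:ℂ)-1) * ((t:ℂ)-y)^((α:ℂ)-1)‖ * (‖c * (y:ℂ)‖^k / (k.factorial:ℝ)) := by
      rw [hF]
      simp only
      rw [norm_mul, norm_div, norm_pow, Complex.norm_natCast]
    rw [h1]
    have h2 : ‖c * (y:ℂ)‖ ≤ ‖c‖ * t := by
      rw [norm_mul, Complex.norm_real, Real.norm_of_nonneg hy.1.le]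
      have := hy.2
      nlinarith [norm_nonneg c]
    gcongr
  have hsumm : Summable (fun k => ∫ y in Set.Ioc (0:ℝ) t, ‖F k y‖) := by
    refine Summable.of_nonneg_of_le (fun k => integral_nonneg (fun y => norm_nonneg _)) hnorm ?_
    exact (Real.summable_pow_div_factorial (‖c‖*t)).mul_left _
  have hswap : (∫ y in Set.Ioc (0:ℝ) t, ∑' k, F k y) = ∑' k, ∫ y in Set.Ioc (0:ℝ) t, F k y :=
    (integral_tsum_of_summable_integral_norm hFint hsumm).symm
  -- term values
  have hbeta : ∀ k : ℕ, Complex.betaIntegral ((β:ℂ)+k) (α:ℂ)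
      = Complex.Gamma ((β:ℂ)+k) * Complex.Gamma α / Complex.Gamma ((β:ℂ)+k+α) := by
    intro k
    have hre : 0 < ((β:ℂ)+k).re := by
      simp only [Complex.add_re, Complex.ofReal_re, Complex.natCast_re]
      positivity
    have hre2 : 0 < ((β:ℂ)+k+α).re := by
      simp only [Complex.add_re, Complex.ofReal_re, Complex.natCast_re]
      positivity
    have h := Complex.Gamma_mul_Gamma_eq_betaIntegral hre hαre
    rw [eq_div_iff (Complex.Gamma_ne_zero_of_re_pos hre2)]
    rw [h]
    ring
  have hterm : ∀ k : ℕ, (∫ y in Set.Ioc (0:ℝ) t, F k y)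
      = (c^k / (k.factorial : ℂ)) * ((t:ℂ)^((β:ℂ)+k+(α:ℂ)-1)
          * (Complex.Gamma ((β:ℂ)+k) * Complex.Gamma α / Complex.Gamma ((β:ℂ)+k+α))) := by
    intro k
    have heq : ∀ y : ℝ, F k y = (c^k / (k.factorial:ℂ))
        * ((y:ℂ)^((β:ℂ)-1) * ((t:ℂ)-y)^((α:ℂ)-1) * (y:ℂ)^k) := by
      intro y
      rw [hF]
      simp only
      rw [mul_pow]
      ring
    simp_rw [heq]
    rw [MeasureTheory.integral_const_mul, term_integral' hαre hβre ht k, hbeta k]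
  -- assemble
  rw [key, setIntegral_congr_fun measurableSet_Ioc hsum_pt, hswap, tsum_congr hterm, hyp1F1]
  rw [show (((t ^ (α + β - 1) : ℝ) : ℂ) * Complex.exp (-ξ * t) *
          (Complex.Gamma α * Complex.Gamma β / Complex.Gamma (α + β)) *
          ∑' k : ℕ, (∏ i ∈ Finset.range k, ((β:ℂ) + i) / (((α:ℂ) + β) + i)) * ((ξ - η) * t) ^ k / (k.factorial : ℂ))
      = Complex.exp (-ξ*t) * ∑' k : ℕ, (((t ^ (α + β - 1) : ℝ) : ℂ) *
          (Complex.Gamma α * Complex.Gamma β / Complex.Gamma ((α:ℂ) + β)) *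
          ((∏ i ∈ Finset.range k, ((β:ℂ) + i) / (((α:ℂ) + β) + i)) * ((ξ - η) * t) ^ k / (k.factorial : ℂ)))
    from by rw [← tsum_mul_left, ← tsum_mul_left]; exact tsum_congr fun k => by ring]
  congr 1
  refine tsum_congr fun k => ?_
  -- termwise identity
  have hprodne : (∏ i ∈ Finset.range k, ((α:ℂ) + β + i)) ≠ 0 := by
    refine Finset.prod_ne_zero_iff.mpr fun i _ => ?_
    intro h
    have h2 : α + β + (i:ℝ) = 0 := by simpa using congrArg Complex.re h
    have : (0:ℝ) ≤ (i:ℝ) := Nat.cast_nonneg i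
    linarith
  have hGne : Complex.Gamma ((α:ℂ) + β) ≠ 0 := by
    apply Complex.Gamma_ne_zero_of_re_pos
    simp only [Complex.add_re, Complex.ofReal_re]
    positivity
  have hfacne : ((k.factorial : ℂ)) ≠ 0 := by exact_mod_cast k.factorial_ne_zero
  have hG1 : Complex.Gamma ((β:ℂ)+k) = Complex.Gamma β * ∏ i ∈ Finset.range k, ((β:ℂ) + i) :=
    Gamma_add_nat' hβre k
  have hG2 : Complex.Gamma ((β:ℂ)+k+α)
      = Complex.Gamma ((α:ℂ)+β) * ∏ i ∈ Finset.range k, ((α:ℂ) + β + i) := by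
    rw [show (β:ℂ)+k+α = ((α:ℂ)+β)+(k:ℂ) by ring]
    exact Gamma_add_nat' (by simp only [Complex.add_re, Complex.ofReal_re]; positivity) k
  have hT : (t:ℂ)^((β:ℂ)+k+(α:ℂ)-1) = (((t ^ (α + β - 1) : ℝ) : ℂ)) * (t:ℂ)^k := by
    rw [Complex.ofReal_cpow ht.le,
      show (β:ℂ)+k+(α:ℂ)-1 = (((α + β - 1 : ℝ)):ℂ) + (k:ℂ) by push_cast; ring,
      Complex.cpow_add _ _ htne, Complex.cpow_natCast]
  rw [hT, hG1, hG2, Finset.prod_div_distrib]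
  rw [show ((ξ - η) * (t:ℂ))^k = c^k * (t:ℂ)^k by rw [← hc, mul_pow]]
  field_simp
end

section
/- Let X and Y be independent non-negative random variables with PDFs f(x) = x^{α−1} Σ_{m=1}^M a_m e^{−ξ_m x} and g(y) = y^{β−1} Σ_{n=1}^N b_n e^{−η_n y}, where α, β > 0 and Re(ξ_m), Re(η_n) > 0. Then the PDF of X + Y is s(t) = t^{α+β−1} · (Γ(α)Γ(β)/Γ(α+β)) Σ_{m=1}^M Σ_{n=1}^N a_m b_n e^{−ξ_m t} ₁F₁(β, α+β; (ξ_m−η_n)t) for t > 0. -/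
open MeasureTheory intervalIntegral

lemma myGamma_add_nat {z : ℂ} (hz : 0 < z.re) (k : ℕ) :
    Complex.Gamma (z + k) = Complex.Gamma z * ∏ i ∈ Finset.range k, (z + i) := by
  induction k with
  | zero => simp
  | succ k ih =>
    have hkre : 0 < (z + (k : ℂ)).re := by
      have : ((k : ℂ)).re = (k : ℝ) := by simp
      rw [Complex.add_re, this]
      have : (0:ℝ) ≤ (k:ℝ) := Nat.cast_nonneg k
      linarith
    have hne : z + (k : ℂ) ≠ 0 := by
      intro h; rw [h] at hkre; simp at hkre
    have h1 : z + ((k + 1 : ℕ) : ℂ) = (z + k) + 1 := by push_cast; ring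
    rw [h1, Complex.Gamma_add_one _ hne, ih, Finset.prod_range_succ]; ring

lemma beta_term {α β : ℝ} (hα : 0 < α) (hβ : 0 < β) (k : ℕ) :
    Complex.betaIntegral ((β : ℂ) + k) α
      = Complex.Gamma α * Complex.Gamma β / Complex.Gamma ((α : ℂ) + β) *
        ∏ i ∈ Finset.range k, (((β : ℂ) + i) / ((α : ℂ) + β + i)) := by
  have hαc : 0 < ((α : ℂ)).re := by simpa using hα
  have hβc : 0 < ((β : ℂ)).re := by simpa using hβ
  have hβk : 0 < ((β : ℂ) + k).re := by
    rw [Complex.add_re]; have : ((k:ℂ)).re = (k:ℝ) := by simp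
    rw [this, Complex.ofReal_re]; positivity
  have hαβ : 0 < ((α : ℂ) + β).re := by
    rw [Complex.add_re, Complex.ofReal_re, Complex.ofReal_re]; positivity
  have hαβk : 0 < ((α : ℂ) + β + k).re := by
    rw [Complex.add_re]; have : ((k:ℂ)).re = (k:ℝ) := by simp
    rw [this]; positivity
  have key := Complex.Gamma_mul_Gamma_eq_betaIntegral hβk hαc
  have h2 : (β : ℂ) + k + α = (α : ℂ) + β + k := by ring
  rw [h2] at key
  have h3 : Complex.Gamma ((α:ℂ) + β + k)
      = Complex.Gamma ((α:ℂ) + β) * ∏ i ∈ Finset.range k, ((α:ℂ) + β + i) :=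
    myGamma_add_nat hαβ k
  have h1 : Complex.Gamma ((β:ℂ) + k)
      = Complex.Gamma β * ∏ i ∈ Finset.range k, ((β:ℂ) + i) :=
    myGamma_add_nat hβc k
  have hG1 : Complex.Gamma ((α:ℂ) + β) ≠ 0 := Complex.Gamma_ne_zero_of_re_pos hαβ
  have hG2 : Complex.Gamma ((α:ℂ) + β + k) ≠ 0 := Complex.Gamma_ne_zero_of_re_pos hαβk
  have hP : (∏ i ∈ Finset.range k, ((α:ℂ) + β + i)) ≠ 0 := by
    apply Finset.prod_ne_zero_iff.mpr
    intro i _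
    intro h
    have : 0 < ((α:ℂ) + β + i).re := by
      rw [Complex.add_re]; have : ((i:ℂ)).re = (i:ℝ) := by simp
      rw [this]; positivity
    rw [h] at this; simp at this
  have hB : Complex.betaIntegral ((β : ℂ) + k) α
      = Complex.Gamma ((β:ℂ)+k) * Complex.Gamma α / Complex.Gamma ((α:ℂ) + β + k) := by
    rw [eq_div_iff hG2, mul_comm (Complex.betaIntegral _ _) _, ← key]
  rw [hB, h1, h3, Finset.prod_div_distrib]
  field_simp


lemma betaish_intble {α β : ℝ} (hα : 0 < α) (hβ : 0 < β) :
    IntervalIntegrable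
      (fun u : ℝ => (((1 - u) ^ (α - 1) : ℝ) : ℂ) * ((u ^ (β - 1) : ℝ) : ℂ)) volume 0 1 := by
  have h := Complex.betaIntegral_convergent (u := (β:ℂ)) (v := (α:ℂ)) (by simpa using hβ)
    (by simpa using hα)
  apply h.congr
  have hs : MeasurableSet (Set.uIoc (0:ℝ) 1) := measurableSet_uIoc
  intro x hx
  beta_reduce
  rw [Set.uIoc_of_le (zero_le_one)] at hx
  have hx0 : (0:ℝ) ≤ x := le_of_lt hx.1
  have hx1 : (0:ℝ) ≤ 1 - x := by linarith [hx.2]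
  have e1 : ((x:ℂ)) ^ ((β:ℂ) - 1) = ((x ^ (β - 1) : ℝ) : ℂ) := by
    rw [Complex.ofReal_cpow hx0]; push_cast; ring_nf
  have e2 : ((1 - (x:ℂ))) ^ ((α:ℂ) - 1) = (((1 - x) ^ (α - 1) : ℝ) : ℂ) := by
    rw [Complex.ofReal_cpow hx1]; push_cast; ring_nf
  rw [e1, e2, mul_comm]

lemma E_intble {α β : ℝ} (hα : 0 < α) (hβ : 0 < β) (z : ℂ) :
    IntervalIntegrable
      (fun u : ℝ => (((1 - u) ^ (α - 1) : ℝ) : ℂ) * ((u ^ (β - 1) : ℝ) : ℂ) *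
        Complex.exp (z * u)) volume 0 1 := by
  apply (betaish_intble hα hβ).mul_continuousOn
  exact (Complex.continuous_exp.comp (continuous_const.mul Complex.continuous_ofReal)).continuousOn

lemma F_intble {α β : ℝ} (hα : 0 < α) (hβ : 0 < β) (z : ℂ) (k : ℕ) :
    IntervalIntegrable
      (fun u : ℝ => (((1 - u) ^ (α - 1) : ℝ) : ℂ) * ((u ^ (β - 1) : ℝ) : ℂ) *
        ((z * u) ^ k / (k.factorial : ℂ))) volume 0 1 := by
  apply (betaish_intble hα hβ).mul_continuousOn
  apply Continuous.continuousOn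
  fun_prop

lemma beta_hyp {α β : ℝ} (hα : 0 < α) (hβ : 0 < β) (z : ℂ) :
    (∫ u in (0:ℝ)..1, (((1 - u) ^ (α - 1) : ℝ) : ℂ) * ((u ^ (β - 1) : ℝ) : ℂ) *
        Complex.exp (z * u))
      = Complex.Gamma α * Complex.Gamma β / Complex.Gamma ((α:ℂ) + β) *
        hyp1F1 β ((α:ℂ) + β) z := by
  set C : ℂ := Complex.Gamma α * Complex.Gamma β / Complex.Gamma ((α:ℂ) + β) with hC
  set F : ℕ → ℝ → ℂ := fun k u => (((1 - u) ^ (α - 1) : ℝ) : ℂ) * ((u ^ (β - 1) : ℝ) : ℂ) *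
      ((z * u) ^ k / (k.factorial : ℂ)) with hF
  have h01 : (0:ℝ) ≤ 1 := zero_le_one
  -- termwise values
  have hterm : ∀ k, (∫ u in (0:ℝ)..1, F k u)
      = C * ((∏ i ∈ Finset.range k, (((β:ℂ) + i) / ((α:ℂ) + β + i))) * z ^ k /
          (k.factorial : ℂ)) := by
    intro k
    have congr1 : (∫ u in (0:ℝ)..1, F k u)
        = ∫ u in (0:ℝ)..1,
            ((u:ℂ) ^ (((β:ℂ) + k) - 1) * (1 - (u:ℂ)) ^ ((α:ℂ) - 1)) *
              (z ^ k / (k.factorial : ℂ)) := by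
      apply intervalIntegral.integral_congr_ae
      filter_upwards [] with u hu
      rw [Set.uIoc_of_le h01] at hu
      have hu0 : 0 < u := hu.1
      have hu1 : (0:ℝ) ≤ 1 - u := by linarith [hu.2]
      have e1 : ((u ^ (β - 1) : ℝ) : ℂ) = (u:ℂ) ^ ((β:ℂ) - 1) := by
        rw [Complex.ofReal_cpow hu0.le]; push_cast; ring_nf
      have e2 : (((1 - u) ^ (α - 1) : ℝ) : ℂ) = (1 - (u:ℂ)) ^ ((α:ℂ) - 1) := by
        rw [Complex.ofReal_cpow hu1]; push_cast; ring_nf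
      have e3 : (u:ℂ) ^ (((β:ℂ) + k) - 1) = (u:ℂ) ^ ((β:ℂ) - 1) * (u:ℂ) ^ (k:ℕ) := by
        have hne : (u:ℂ) ≠ 0 := by exact_mod_cast hu0.ne'
        rw [← Complex.cpow_natCast, ← Complex.cpow_add _ _ hne]
        congr 1; ring
      rw [hF]
      simp only [e1, e2, e3, mul_pow]
      ring
    rw [congr1, intervalIntegral.integral_mul_const]
    have : (∫ u in (0:ℝ)..1, (u:ℂ) ^ (((β:ℂ) + k) - 1) * (1 - (u:ℂ)) ^ ((α:ℂ) - 1))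
        = Complex.betaIntegral ((β:ℂ) + k) α := rfl
    rw [this, beta_term hα hβ k]
    ring
  -- integrability of each term on Ioc
  have hFi : ∀ k, IntegrableOn (F k) (Set.Ioc (0:ℝ) 1) volume := fun k =>
    (intervalIntegrable_iff_integrableOn_Ioc_of_le h01).mp (F_intble hα hβ z k)
  have hBi : IntegrableOn
      (fun u : ℝ => ‖(((1 - u) ^ (α - 1) : ℝ) : ℂ) * ((u ^ (β - 1) : ℝ) : ℂ)‖)
      (Set.Ioc (0:ℝ) 1) volume :=
    ((intervalIntegrable_iff_integrableOn_Ioc_of_le h01).mp (betaish_intble hα hβ)).norm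
  set B : ℝ := ∫ u in Set.Ioc (0:ℝ) 1,
      ‖(((1 - u) ^ (α - 1) : ℝ) : ℂ) * ((u ^ (β - 1) : ℝ) : ℂ)‖ with hB
  have hbound : ∀ k, (∫ u in Set.Ioc (0:ℝ) 1, ‖F k u‖)
      ≤ B * (‖z‖ ^ k / (k.factorial : ℝ)) := by
    intro k
    have hmono : ∀ u ∈ Set.Ioc (0:ℝ) 1, ‖F k u‖
        ≤ ‖(((1 - u) ^ (α - 1) : ℝ) : ℂ) * ((u ^ (β - 1) : ℝ) : ℂ)‖ *
            (‖z‖ ^ k / (k.factorial : ℝ)) := by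
      intro u hu
      rw [hF]
      simp only [norm_mul, norm_div, norm_pow]
      have h2 : ‖((k.factorial : ℂ))‖ = (k.factorial : ℝ) := by
        simp [Complex.norm_natCast]
      rw [h2]
      gcongr
      have h3 : ‖((u:ℝ):ℂ)‖ ≤ 1 := by
        rw [Complex.norm_real, Real.norm_eq_abs, abs_of_pos hu.1]; exact hu.2
      calc ‖z‖ * ‖((u:ℝ):ℂ)‖ ≤ ‖z‖ * 1 := mul_le_mul_of_nonneg_left h3 (norm_nonneg z)
        _ = ‖z‖ := mul_one _
    calc (∫ u in Set.Ioc (0:ℝ) 1, ‖F k u‖)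
        ≤ ∫ u in Set.Ioc (0:ℝ) 1,
            ‖(((1 - u) ^ (α - 1) : ℝ) : ℂ) * ((u ^ (β - 1) : ℝ) : ℂ)‖ *
              (‖z‖ ^ k / (k.factorial : ℝ)) := by
          apply setIntegral_mono_on (hFi k).norm (hBi.mul_const _) measurableSet_Ioc hmono
      _ = B * (‖z‖ ^ k / (k.factorial : ℝ)) := by rw [MeasureTheory.integral_mul_const]
  have hsum : Summable fun k => ∫ u in Set.Ioc (0:ℝ) 1, ‖F k u‖ :=
    Summable.of_nonneg_of_le (fun k => integral_nonneg fun u => norm_nonneg _)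
      hbound ((Real.summable_pow_div_factorial ‖z‖).mul_left B)
  have hswap := MeasureTheory.integral_tsum_of_summable_integral_norm hFi hsum
  have hexp : ∀ u : ℝ,
      (((1 - u) ^ (α - 1) : ℝ) : ℂ) * ((u ^ (β - 1) : ℝ) : ℂ) * Complex.exp (z * u)
        = ∑' k, F k u := by
    intro u
    rw [Complex.exp_eq_exp_ℂ, NormedSpace.exp_eq_tsum_div]
    exact (tsum_mul_left).symm
  rw [intervalIntegral.integral_of_le h01]
  simp_rw [hexp]
  rw [← hswap]
  have : ∀ k, (∫ u in Set.Ioc (0:ℝ) 1, F k u) = ∫ u in (0:ℝ)..1, F k u := fun k =>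
    (intervalIntegral.integral_of_le h01).symm
  simp_rw [this, hterm]
  rw [tsum_mul_left]
  rfl

set_option maxHeartbeats 1000000 in
theorem pdf_of_sum
    (α β : ℝ) (hα : 0 < α) (hβ : 0 < β)
    (M N : ℕ) (a : Fin M → ℂ) (b : Fin N → ℂ) (ξ : Fin M → ℂ) (η : Fin N → ℂ)
    (hξ : ∀ m, 0 < (ξ m).re) (hη : ∀ n, 0 < (η n).re)
    (f g : ℝ → ℝ)
    (hf : ∀ x > (0 : ℝ), ((f x : ℝ) : ℂ) =
      ((x ^ (α - 1) : ℝ) : ℂ) * ∑ m, a m * Complex.exp (-ξ m * x))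
    (hg : ∀ y > (0 : ℝ), ((g y : ℝ) : ℂ) =
      ((y ^ (β - 1) : ℝ) : ℂ) * ∑ n, b n * Complex.exp (-η n * y))
    (hf0 : ∀ x, 0 ≤ f x) (hg0 : ∀ y, 0 ≤ g y)
    (hf1 : ∫ x in Set.Ioi (0 : ℝ), f x = 1)
    (hg1 : ∫ y in Set.Ioi (0 : ℝ), g y = 1)
    (t : ℝ) (ht : 0 < t) :
    ((∫ y in (0 : ℝ)..t, f (t - y) * g y : ℝ) : ℂ)
      = ((t ^ (α + β - 1) : ℝ) : ℂ) *
          (Complex.Gamma α * Complex.Gamma β / Complex.Gamma (α + β)) *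
          ∑ m, ∑ n, a m * b n * Complex.exp (-ξ m * t) *
            hyp1F1 β (α + β) ((ξ m - η n) * t) := by
  have h01 : (0:ℝ) ≤ 1 := zero_le_one
  rw [← intervalIntegral.integral_ofReal]
  have sub : (∫ y in (0:ℝ)..t, ((f (t - y) * g y : ℝ) : ℂ))
      = t • ∫ u in (0:ℝ)..1, ((f (t - t * u) * g (t * u) : ℝ) : ℂ) := by
    rw [intervalIntegral.smul_integral_comp_mul_left
      (fun y => ((f (t - y) * g y : ℝ) : ℂ)) t, mul_zero, mul_one]
  rw [sub]
  have expand : ∀ (P Q : ℂ) (s1 : Fin M → ℂ) (s2 : Fin N → ℂ),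
      (P * ∑ m, s1 m) * (Q * ∑ n, s2 n) = ∑ m, ∑ n, P * Q * (s1 m * s2 n) := by
    intro P Q s1 s2
    calc (P * ∑ m, s1 m) * (Q * ∑ n, s2 n) = (P * Q) * ((∑ m, s1 m) * (∑ n, s2 n)) := by ring
      _ = (P * Q) * ∑ m, ∑ n, s1 m * s2 n := by rw [Finset.sum_mul_sum]
      _ = ∑ m, (P * Q) * ∑ n, s1 m * s2 n := by rw [Finset.mul_sum]
      _ = ∑ m, ∑ n, P * Q * (s1 m * s2 n) :=
          Finset.sum_congr rfl fun m _ => Finset.mul_sum _ _ _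
  have key : (∫ u in (0:ℝ)..1, ((f (t - t * u) * g (t * u) : ℝ) : ℂ))
      = ∫ u in (0:ℝ)..1, ∑ m, ∑ n,
          (a m * b n * Complex.exp (-ξ m * t) *
            (((t ^ (α - 1) : ℝ) : ℂ) * ((t ^ (β - 1) : ℝ) : ℂ))) *
          ((((1 - u) ^ (α - 1) : ℝ) : ℂ) * ((u ^ (β - 1) : ℝ) : ℂ) *
            Complex.exp ((ξ m - η n) * t * u)) := by
    apply intervalIntegral.integral_congr_ae
    have h1 : ∀ᵐ u : ℝ, u ≠ (1:ℝ) := by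
      have : volume ({(1:ℝ)} : Set ℝ) = 0 := Real.volume_singleton
      exact (compl_mem_ae_iff.mpr this : _)
    filter_upwards [h1] with u hu1 hu
    rw [Set.uIoc_of_le h01] at hu
    have hu0 : 0 < u := hu.1
    have hu1' : u < 1 := lt_of_le_of_ne hu.2 hu1
    have hpos1 : 0 < t - t * u := by nlinarith
    have hpos2 : 0 < t * u := by positivity
    rw [Complex.ofReal_mul, hf _ hpos1, hg _ hpos2]
    have e1 : (((t - t * u) ^ (α - 1) : ℝ) : ℂ)
        = ((t ^ (α - 1) : ℝ) : ℂ) * (((1 - u) ^ (α - 1) : ℝ) : ℂ) := by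
      rw [← Complex.ofReal_mul, show t - t * u = t * (1 - u) by ring,
        Real.mul_rpow ht.le (by linarith)]
    have e2 : (((t * u) ^ (β - 1) : ℝ) : ℂ)
        = ((t ^ (β - 1) : ℝ) : ℂ) * ((u ^ (β - 1) : ℝ) : ℂ) := by
      rw [← Complex.ofReal_mul, Real.mul_rpow ht.le hu0.le]
    rw [e1, e2, mul_assoc (((t ^ (α - 1) : ℝ) : ℂ)), mul_assoc (((t ^ (β - 1) : ℝ) : ℂ))]
    rw [show (((t ^ (α-1) : ℝ) : ℂ) * ((((1-u) ^ (α-1) : ℝ) : ℂ) * ∑ m, a m * Complex.exp (-ξ m * ((t - t*u : ℝ) : ℂ)))) *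
        (((t ^ (β-1) : ℝ) : ℂ) * (((u ^ (β-1) : ℝ) : ℂ) * ∑ n, b n * Complex.exp (-η n * ((t*u : ℝ) : ℂ))))
      = ((((t ^ (α-1) : ℝ) : ℂ) * (((1-u) ^ (α-1) : ℝ) : ℂ)) * ∑ m, a m * Complex.exp (-ξ m * ((t - t*u : ℝ) : ℂ))) *
        ((((t ^ (β-1) : ℝ) : ℂ) * (((u ^ (β-1) : ℝ) : ℂ))) * ∑ n, b n * Complex.exp (-η n * ((t*u : ℝ) : ℂ))) from by ring]
    rw [expand]
    refine Finset.sum_congr rfl fun m _ => Finset.sum_congr rfl fun n _ => ?_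
    have eexp : Complex.exp (-ξ m * ((t - t * u : ℝ) : ℂ)) *
        Complex.exp (-η n * ((t * u : ℝ) : ℂ))
        = Complex.exp (-ξ m * t) * Complex.exp ((ξ m - η n) * t * u) := by
      rw [← Complex.exp_add, ← Complex.exp_add]
      congr 1
      push_cast
      ring
    linear_combination (((t ^ (α-1) : ℝ) : ℂ) * (((1-u) ^ (α-1) : ℝ) : ℂ) *
      ((t ^ (β-1) : ℝ) : ℂ) * ((u ^ (β-1) : ℝ) : ℂ) * a m * b n) * eexp
  rw [key]
  have hintg : ∀ m ∈ (Finset.univ : Finset (Fin M)), IntervalIntegrable (fun u : ℝ => ∑ n,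
      (a m * b n * Complex.exp (-ξ m * t) *
        (((t ^ (α - 1) : ℝ) : ℂ) * ((t ^ (β - 1) : ℝ) : ℂ))) *
      ((((1 - u) ^ (α - 1) : ℝ) : ℂ) * ((u ^ (β - 1) : ℝ) : ℂ) *
        Complex.exp ((ξ m - η n) * t * u))) volume 0 1 := by
    intro m _
    rw [← Finset.sum_fn]
    exact IntervalIntegrable.sum _ fun n _ => (E_intble hα hβ ((ξ m - η n) * t)).const_mul _
  rw [intervalIntegral.integral_finset_sum hintg]
  have inner : ∀ m : Fin M, (∫ u in (0:ℝ)..1, ∑ n,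
      (a m * b n * Complex.exp (-ξ m * t) *
        (((t ^ (α - 1) : ℝ) : ℂ) * ((t ^ (β - 1) : ℝ) : ℂ))) *
      ((((1 - u) ^ (α - 1) : ℝ) : ℂ) * ((u ^ (β - 1) : ℝ) : ℂ) *
        Complex.exp ((ξ m - η n) * t * u)))
      = ∑ n, (a m * b n * Complex.exp (-ξ m * t) *
          (((t ^ (α - 1) : ℝ) : ℂ) * ((t ^ (β - 1) : ℝ) : ℂ))) *
          (Complex.Gamma α * Complex.Gamma β / Complex.Gamma ((α:ℂ) + β) *
            hyp1F1 β ((α:ℂ) + β) ((ξ m - η n) * t)) := by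
    intro m
    have hintg2 : ∀ n ∈ (Finset.univ : Finset (Fin N)), IntervalIntegrable (fun u : ℝ =>
        (a m * b n * Complex.exp (-ξ m * t) *
          (((t ^ (α - 1) : ℝ) : ℂ) * ((t ^ (β - 1) : ℝ) : ℂ))) *
        ((((1 - u) ^ (α - 1) : ℝ) : ℂ) * ((u ^ (β - 1) : ℝ) : ℂ) *
          Complex.exp ((ξ m - η n) * t * u))) volume 0 1 := fun n _ =>
      (E_intble hα hβ ((ξ m - η n) * t)).const_mul _
    rw [intervalIntegral.integral_finset_sum hintg2]
    refine Finset.sum_congr rfl fun n _ => ?_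
    rw [intervalIntegral.integral_const_mul, beta_hyp hα hβ]
  simp_rw [inner]
  have ht1 : (t : ℂ) * ((t ^ (α - 1) : ℝ) : ℂ) * ((t ^ (β - 1) : ℝ) : ℂ)
      = ((t ^ (α + β - 1) : ℝ) : ℂ) := by
    rw [← Complex.ofReal_mul, ← Complex.ofReal_mul]
    congr 1
    rw [show α + β - 1 = 1 + (α - 1) + (β - 1) by ring, Real.rpow_add ht,
      Real.rpow_add ht, Real.rpow_one]
  rw [Complex.real_smul, Finset.mul_sum, Finset.mul_sum]
  refine Finset.sum_congr rfl fun m _ => ?_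
  rw [Finset.mul_sum, Finset.mul_sum]
  refine Finset.sum_congr rfl fun n _ => ?_
  linear_combination (a m * b n * Complex.exp (-ξ m * t) *
    (Complex.Gamma α * Complex.Gamma β / Complex.Gamma ((α:ℂ) + β)) *
    hyp1F1 β ((α:ℂ) + β) ((ξ m - η n) * t)) * ht1
end

section
/- For x > 0, y > 0, and real p, the modified Bessel function of the second kind satisfies 2^{p+1} (y/x)^p K_p(xy) = ∫_{−∞}^{∞} exp(−x² e^{τ}/4 − y² e^{−τ} + pτ) dτ. -/
open MeasureTheory

/-- Modified Bessel function of the second kind (real argument `x > 0`), via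
`K_ν(x) = ∫_0^∞ exp(-x cosh t) cosh (ν t) dt`. -/
noncomputable def besselKR (ν x : ℝ) : ℝ :=
  ∫ t in Set.Ioi (0 : ℝ), Real.exp (-x * Real.cosh t) * Real.cosh (ν * t)

lemma quad_le_cosh (s : ℝ) : 1 + s ^ 2 / 2 ≤ Real.cosh s := by
  rw [← Real.cosh_abs]
  set t := |s| with ht
  have ht0 : 0 ≤ t := abs_nonneg s
  have hs2 : s ^ 2 = t ^ 2 := (sq_abs s).symm
  have h1 : Real.cosh t = 2 * Real.sinh (t / 2) ^ 2 + 1 := by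
    have := Real.cosh_sq (t / 2)
    have h2 := Real.cosh_two_mul (t / 2)
    rw [show 2 * (t / 2) = t by ring] at h2
    nlinarith
  have h2 : t / 2 ≤ Real.sinh (t / 2) :=
    Real.self_le_sinh_iff.2 (by linarith)
  nlinarith

lemma integrable_gauss_lin (b c : ℝ) (hb : 0 < b) :
    Integrable fun s : ℝ => Real.exp (-b * s ^ 2 + c * s) := by
  have key : ∀ s : ℝ, -b * s ^ 2 + c * s
      = -b * (s - c / (2 * b)) ^ 2 + c ^ 2 / (4 * b) := by
    intro s; field_simp; ring
  simp_rw [key, Real.exp_add]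
  exact ((integrable_exp_neg_mul_sq hb).comp_sub_right (c / (2 * b))).mul_const _

lemma integrable_main (a p : ℝ) (ha : 0 < a) :
    Integrable fun s : ℝ => Real.exp (-a * Real.cosh s + p * s) := by
  refine (integrable_gauss_lin (a / 2) p (by positivity)).mono ?_ (ae_of_all _ fun s => ?_)
  · exact (Real.continuous_exp.comp (by continuity)).aestronglyMeasurable
  · rw [Real.norm_eq_abs, Real.abs_exp, Real.norm_eq_abs, Real.abs_exp, Real.exp_le_exp]
    have := quad_le_cosh s
    nlinarith

lemma split_integral (a p : ℝ) (ha : 0 < a) :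
    ∫ s : ℝ, Real.exp (-a * Real.cosh s + p * s) = 2 * besselKR p a := by
  have hi := integrable_main a p ha
  have hi' := integrable_main a (-p) ha
  have hneg : ∫ s in Set.Iic (0 : ℝ), Real.exp (-a * Real.cosh s + p * s)
      = ∫ s in Set.Ioi (0 : ℝ), Real.exp (-a * Real.cosh s + (-p) * s) := by
    have := integral_comp_neg_Ioi (0 : ℝ)
      (fun s => Real.exp (-a * Real.cosh s + p * s))
    rw [neg_zero] at this
    rw [← this]
    refine setIntegral_congr_fun measurableSet_Ioi fun s _ => ?_
    rw [Real.cosh_neg]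
    ring_nf
  rw [← intervalIntegral.integral_Iic_add_Ioi (b := 0) hi.integrableOn hi.integrableOn, hneg]
  rw [← integral_add hi'.integrableOn hi.integrableOn]
  unfold besselKR
  rw [← integral_const_mul]
  refine setIntegral_congr_fun measurableSet_Ioi fun s _ => ?_
  simp only [Real.cosh_eq, Real.exp_add, neg_mul]
  ring

theorem besselK_integral_representation
    (p x y : ℝ) (hx : 0 < x) (hy : 0 < y) :
    2 ^ (p + 1) * (y / x) ^ p * besselKR p (x * y)
      = ∫ τ : ℝ, Real.exp (-x ^ 2 * Real.exp τ / 4 - y ^ 2 * Real.exp (-τ) + p * τ) := by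
  have h2yx : (0 : ℝ) < 2 * y / x := by positivity
  set c := Real.log (2 * y / x) with hc
  have hec : Real.exp c = 2 * y / x := Real.exp_log h2yx
  have hshift := integral_add_right_eq_self
    (μ := volume)
    (fun τ : ℝ => Real.exp (-x ^ 2 * Real.exp τ / 4 - y ^ 2 * Real.exp (-τ) + p * τ)) c
  rw [← hshift]
  have hpt : ∀ s : ℝ,
      Real.exp (-x ^ 2 * Real.exp (s + c) / 4 - y ^ 2 * Real.exp (-(s + c)) + p * (s + c))
        = (2 * y / x) ^ p * Real.exp (-(x * y) * Real.cosh s + p * s) := by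
    intro s
    rw [Real.rpow_def_of_pos h2yx, ← Real.exp_add]
    congr 1
    rw [Real.exp_add, hec, show -(s + c) = -s + -c by ring, Real.exp_add,
      Real.exp_neg c, hec, Real.cosh_eq]
    field_simp
    ring
  simp_rw [hpt]
  rw [integral_const_mul, split_integral (x * y) p (by positivity)]
  have h1 : (2 : ℝ) ^ (p + 1) = 2 ^ p * 2 := by
    rw [Real.rpow_add (by norm_num), Real.rpow_one]
  have h2 : (2 * y / x : ℝ) ^ p = 2 ^ p * (y / x) ^ p := by
    rw [mul_div_assoc, Real.mul_rpow (by norm_num) (le_of_lt (by positivity))]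
  rw [h1, h2]
  ring
end
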